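/- (Lions' sub-additivity lemma) Let ρ > 0 and let F : [0,ρ] → ℝ satisfy F(θη) ≤ θ F(η) for all η ∈ (0,ρ) and all θ ∈ (1, ρ/η]. Then F(ρ) ≤ F(η) + F(ρ−η) for all η ∈ (0,ρ). Moreover, if η₀ ∈ (0,ρ) satisfies the strict inequality F(θη₀) < θ F(η₀) for all θ ∈ (1, ρ/η₀], then F(ρ) < F(η₀) + F(ρ−η₀). -/
import Mathlib


/-- Lions' sub-additivity lemma. -/
theorem lions_subadditivity (ρ : ℝ) (hρ : 0 < ρ) (F : ℝ → ℝ)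
    (h : ∀ η ∈ Set.Ioo 0 ρ, ∀ θ ∈ Set.Ioc 1 (ρ / η), F (θ * η) ≤ θ * F η) :
    (∀ η ∈ Set.Ioo 0 ρ, F ρ ≤ F η + F (ρ - η)) ∧
    (∀ η₀ ∈ Set.Ioo 0 ρ,
      (∀ θ ∈ Set.Ioc 1 (ρ / η₀), F (θ * η₀) < θ * F η₀) →
      F ρ < F η₀ + F (ρ - η₀)) := by
  have key : ∀ η ∈ Set.Ioo 0 ρ, η * F ρ ≤ ρ * F η := by
    intro η hη
    have h1 : (1 : ℝ) < ρ / η := (one_lt_div hη.1).2 hη.2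
    have := h η hη (ρ / η) ⟨h1, le_refl _⟩
    rw [div_mul_cancel₀ _ (ne_of_gt hη.1)] at this
    have := mul_le_mul_of_nonneg_left this (le_of_lt hη.1)
    calc η * F ρ ≤ η * (ρ / η * F η) := this
      _ = ρ * F η := by field_simp [hη.1.ne']
  constructor
  · intro η hη
    have hb : ρ - η ∈ Set.Ioo 0 ρ := ⟨by linarith [hη.2], by linarith [hη.1]⟩
    have A := key η hη
    have B := key _ hb
    nlinarith [hη.1, hb.1, A, B]
  · intro η₀ hη hs
    have h1 : (1 : ℝ) < ρ / η₀ := (one_lt_div hη.1).2 hη.2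
    have A0 := hs (ρ / η₀) ⟨h1, le_refl _⟩
    rw [div_mul_cancel₀ _ (ne_of_gt hη.1)] at A0
    have A : η₀ * F ρ < ρ * F η₀ := by
      have := mul_lt_mul_of_pos_left A0 hη.1
      calc η₀ * F ρ < η₀ * (ρ / η₀ * F η₀) := this
        _ = ρ * F η₀ := by field_simp [hη.1.ne']
    have hb : ρ - η₀ ∈ Set.Ioo 0 ρ := ⟨by linarith [hη.2], by linarith [hη.1]⟩
    have B := key _ hb
    nlinarith [hη.1, hb.1, A, B]
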